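/- For every trimming level α ∈ (0,1) and every classifier g, the trimmed classification error satisfies R_α(g) = (R(g) − α)_+ / (1 − α). -/

import Mathlib

open MeasureTheory

noncomputable section

/-- The classification error `R(g) = P({(y,x) : g(x) ≠ y})`. -/
def classErr {p : ℕ} (P : Measure (Bool × (Fin p → ℝ))) (g : (Fin p → ℝ) → Bool) : ℝ :=
  (P {z | g z.2 ≠ z.1}).toReal

/-- The set of `α`-trimmed versions of a measure `μ`:
probability measures `ν ≪ μ` with `dν/dμ ≤ 1/(1-α)` `μ`-a.s. -/
def trimmedSet {Ω : Type*} [MeasurableSpace Ω] (μ : Measure Ω) (α : ℝ) :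
    Set (Measure Ω) :=
  {ν | IsProbabilityMeasure ν ∧ ν ≪ μ ∧
    ∀ᵐ z ∂μ, ν.rnDeriv μ z ≤ ENNReal.ofReal (1 / (1 - α))}

/-- The trimmed classification error `R_α(g) = inf_{Q ∈ 𝓡_α(P)} Q(g(x) ≠ y)`. -/
def trimmedErr {p : ℕ} (P : Measure (Bool × (Fin p → ℝ))) (α : ℝ)
    (g : (Fin p → ℝ) → Bool) : ℝ :=
  sInf ((fun Q => (Q {z | g z.2 ≠ z.1}).toReal) '' trimmedSet P α)

lemma trimmed_lower {Ω : Type*} [MeasurableSpace Ω] (μ : Measure Ω) [IsProbabilityMeasure μ]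
    {α : ℝ} (hα : α ∈ Set.Ioo (0:ℝ) 1) {A : Set Ω} (hA : MeasurableSet A)
    {ν : Measure Ω} (hν : ν ∈ trimmedSet μ α) :
    max ((μ A).toReal - α) 0 / (1 - α) ≤ (ν A).toReal := by
  obtain ⟨hprob, hac, hbound⟩ := hν
  haveI := hprob
  have h1α : (0:ℝ) < 1 - α := by linarith [hα.2]
  -- bound ν Aᶜ
  have hbd : ν Aᶜ ≤ ENNReal.ofReal (1 / (1 - α)) * μ Aᶜ := by
    rw [← Measure.setLIntegral_rnDeriv hac Aᶜ, ← setLIntegral_const Aᶜ]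
    refine lintegral_mono_ae ?_
    exact ae_restrict_of_ae hbound
  have hνfin : ν Aᶜ ≠ ⊤ := measure_ne_top ν _
  have hrhsfin : ENNReal.ofReal (1 / (1 - α)) * μ Aᶜ ≠ ⊤ :=
    ENNReal.mul_ne_top ENNReal.ofReal_ne_top (measure_ne_top μ _)
  have hbdR : (ν Aᶜ).toReal ≤ (1 / (1 - α)) * (μ Aᶜ).toReal := by
    have := ENNReal.toReal_mono hrhsfin hbd
    rwa [ENNReal.toReal_mul, ENNReal.toReal_ofReal (by positivity)] at this
  have hsumν : (ν A).toReal + (ν Aᶜ).toReal = 1 := by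
    rw [← ENNReal.toReal_add (measure_ne_top ν _) (measure_ne_top ν _),
      measure_add_measure_compl hA, measure_univ, ENNReal.toReal_one]
  have hsumμ : (μ A).toReal + (μ Aᶜ).toReal = 1 := by
    rw [← ENNReal.toReal_add (measure_ne_top μ _) (measure_ne_top μ _),
      measure_add_measure_compl hA, measure_univ, ENNReal.toReal_one]
  rw [← max_div_div_right h1α.le, zero_div]
  refine max_le ?_ ENNReal.toReal_nonneg
  rw [div_le_iff₀ h1α]
  rw [one_div_mul_eq_div] at hbdR
  have key : (ν Aᶜ).toReal * (1 - α) ≤ (μ Aᶜ).toReal := (le_div_iff₀ h1α).1 hbdR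
  nlinarith [key, hsumν, hsumμ]

lemma trimmed_attain {Ω : Type*} [MeasurableSpace Ω] (μ : Measure Ω) [IsProbabilityMeasure μ]
    {α : ℝ} (hα : α ∈ Set.Ioo (0:ℝ) 1) {A : Set Ω} (hA : MeasurableSet A) :
    ∃ ν ∈ trimmedSet μ α, (ν A).toReal = max ((μ A).toReal - α) 0 / (1 - α) := by
  have h1α : (0:ℝ) < 1 - α := by linarith [hα.2]
  set β := ENNReal.ofReal (1 / (1 - α)) with hβ
  have hβT : β ≠ ⊤ := ENNReal.ofReal_ne_top
  have hμAfin : μ A ≠ ⊤ := measure_ne_top μ _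
  have hμAcfin : μ Aᶜ ≠ ⊤ := measure_ne_top μ _
  have hsumμ : (μ A).toReal + (μ Aᶜ).toReal = 1 := by
    rw [← ENNReal.toReal_add hμAfin hμAcfin,
      measure_add_measure_compl hA, measure_univ, ENNReal.toReal_one]
  by_cases hcase : (μ A).toReal ≤ α
  · -- trivial case: put all mass on Aᶜ
    set c : ENNReal := (μ Aᶜ)⁻¹ with hc
    set f : Ω → ENNReal := Aᶜ.indicator (fun _ => c) with hf
    have hfm : Measurable f := measurable_const.indicator hA.compl
    have hAc0 : μ Aᶜ ≠ 0 := by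
      intro h
      rw [h] at hsumμ
      simp at hsumμ
      nlinarith [hα.1]
    have hint : ∫⁻ z, f z ∂μ = 1 := by
      rw [hf, lintegral_indicator hA.compl, setLIntegral_const,
        ENNReal.inv_mul_cancel hAc0 hμAcfin]
    refine ⟨μ.withDensity f, ⟨?_, withDensity_absolutelyContinuous μ f, ?_⟩, ?_⟩
    · constructor
      rw [withDensity_apply f MeasurableSet.univ, Measure.restrict_univ, hint]
    · refine (Measure.rnDeriv_withDensity μ hfm).mono fun z hz => ?_
      rw [hz, hf]
      by_cases hzA : z ∈ Aᶜ
      · simp only [Set.indicator_of_mem hzA]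
        have h1 : ENNReal.ofReal (1 - α) ≤ μ Aᶜ := by
          apply ENNReal.ofReal_le_of_le_toReal
          linarith
        calc c = (μ Aᶜ)⁻¹ := rfl
          _ ≤ (ENNReal.ofReal (1 - α))⁻¹ := ENNReal.inv_le_inv.2 h1
          _ = β := by rw [hβ, one_div, ENNReal.ofReal_inv_of_pos h1α]
      · simp [Set.indicator_of_notMem hzA]
    · have : (μ.withDensity f) A = 0 := by
        rw [withDensity_apply f hA]
        have : ∀ᵐ z ∂(μ.restrict A), f z = 0 := by
          refine (ae_restrict_iff' hA).2 (ae_of_all _ fun z hz => ?_)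
          rw [hf, Set.indicator_of_notMem (by simpa using hz)]
        rw [lintegral_congr_ae this, lintegral_zero]
      rw [this, ENNReal.toReal_zero, max_eq_right (by linarith), zero_div]
  · -- main case: μ A > α
    push_neg at hcase
    have hμA0 : μ A ≠ 0 := by
      intro h
      rw [h] at hcase
      simp at hcase
      linarith [hα.1]
    have hβAc1 : β * μ Aᶜ ≤ 1 := by
      have hfin : β * μ Aᶜ ≠ ⊤ := ENNReal.mul_ne_top hβT hμAcfin
      rw [← ENNReal.toReal_le_toReal hfin ENNReal.one_ne_top, ENNReal.toReal_one,
        ENNReal.toReal_mul, hβ, ENNReal.toReal_ofReal (by positivity),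
        div_mul_eq_mul_div, one_mul, div_le_one h1α]
      linarith
    set a : ENNReal := (1 - β * μ Aᶜ) / μ A with ha
    set f : Ω → ENNReal := fun z => A.indicator (fun _ => a) z + Aᶜ.indicator (fun _ => β) z
      with hf
    have hfm : Measurable f :=
      (measurable_const.indicator hA).add (measurable_const.indicator hA.compl)
    have hβ1 : (1:ENNReal) ≤ β := by
      rw [hβ, ← ENNReal.ofReal_one]
      apply ENNReal.ofReal_le_ofReal
      rw [le_div_iff₀ h1α]; linarith [hα.1]
    have haβ : a ≤ β := by
      rw [ha, ENNReal.div_le_iff hμA0 hμAfin]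
      rw [tsub_le_iff_right, ← mul_add, measure_add_measure_compl hA, measure_univ, mul_one]
      exact hβ1
    have hfβ : ∀ z, f z ≤ β := by
      intro z
      rw [hf]; beta_reduce
      by_cases hz : z ∈ A
      · rw [Set.indicator_of_mem hz, Set.indicator_of_notMem (Set.notMem_compl_iff.2 hz), add_zero]
        exact haβ
      · rw [Set.indicator_of_notMem hz, Set.indicator_of_mem (Set.mem_compl hz), zero_add]
    have hνA : (μ.withDensity f) A = 1 - β * μ Aᶜ := by
      rw [withDensity_apply f hA]
      have hcg : ∀ᵐ z ∂(μ.restrict A), f z = a := by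
        refine (ae_restrict_iff' hA).2 (ae_of_all _ fun z hz => ?_)
        rw [hf]; beta_reduce
        rw [Set.indicator_of_mem hz, Set.indicator_of_notMem (Set.notMem_compl_iff.2 hz), add_zero]
      rw [lintegral_congr_ae hcg, setLIntegral_const, ha,
        ENNReal.div_mul_cancel hμA0 hμAfin]
    have hint : ∫⁻ z, f z ∂μ = 1 := by
      rw [hf, lintegral_add_left (measurable_const.indicator hA),
        lintegral_indicator hA, lintegral_indicator hA.compl,
        setLIntegral_const, setLIntegral_const, ha,
        ENNReal.div_mul_cancel hμA0 hμAfin, tsub_add_cancel_of_le hβAc1]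
    refine ⟨μ.withDensity f, ⟨?_, withDensity_absolutelyContinuous μ f, ?_⟩, ?_⟩
    · constructor
      rw [withDensity_apply f MeasurableSet.univ, Measure.restrict_univ, hint]
    · exact (Measure.rnDeriv_withDensity μ hfm).mono fun z hz => hz ▸ hfβ z
    · rw [hνA, ENNReal.toReal_sub_of_le hβAc1 ENNReal.one_ne_top, ENNReal.toReal_one,
        ENNReal.toReal_mul, hβ, ENNReal.toReal_ofReal (by positivity),
        max_eq_left (by linarith)]
      have hAc : (μ Aᶜ).toReal = 1 - (μ A).toReal := by linarith
      rw [hAc]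
      field_simp
      ring

/-- Proposition 1: `R_α(g) = (R(g) − α)_+ / (1 − α)`. -/
theorem trimmedErr_eq {p : ℕ} (P : Measure (Bool × (Fin p → ℝ))) [IsProbabilityMeasure P]
    {α : ℝ} (hα : α ∈ Set.Ioo (0 : ℝ) 1)
    {g : (Fin p → ℝ) → Bool} (hg : Measurable g) :
    trimmedErr P α g = max (classErr P g - α) 0 / (1 - α) := by
  have hA : MeasurableSet {z : Bool × (Fin p → ℝ) | g z.2 ≠ z.1} := by
    have h1 : Measurable fun z : Bool × (Fin p → ℝ) => g z.2 := hg.comp measurable_snd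
    exact (measurableSet_eq_fun h1 measurable_fst).compl
  obtain ⟨ν, hν, hval⟩ := trimmed_attain P hα hA
  unfold trimmedErr classErr
  apply le_antisymm
  · exact csInf_le ⟨0, by rintro x ⟨Q, hQ, rfl⟩; exact ENNReal.toReal_nonneg⟩
      ⟨ν, hν, hval⟩
  · refine le_csInf ⟨_, ⟨ν, hν, rfl⟩⟩ ?_
    rintro x ⟨Q, hQ, rfl⟩
    exact trimmed_lower P hα hA hQ

end
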